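/- For 0 ≤ j ≤ n−1, the polynomial R_j(z) := −Q_n^j(z) π_n(z) + P_n^j(z) · (−2πi κ_{n-1}² π_{n-1}(z)) satisfies ∫_ℝ R_j(x) π_{n−j−1}(x) e^{-V(x)} dx = −2πi. -/
import Mathlib


open MeasureTheory Polynomial

noncomputable section

/-- The coefficient `b_j` of `z^{n-j}` in `π_n`. -/
def bcoef (n : ℕ) (p : ℕ → Polynomial ℝ) (j : ℕ) : ℂ :=
  if j ≤ n then (((p n).coeff (n - j) : ℝ) : ℂ) else 0

/-- The coefficient `c_j` of `z^{n-j}` in `−2πi κ_{n-1}² π_{n-1}`. -/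
def ccoef (n : ℕ) (p : ℕ → Polynomial ℝ) (κ : ℕ → ℝ) (j : ℕ) : ℂ :=
  if j ≤ n then
    -(2 * Real.pi * Complex.I) * ((κ (n - 1) : ℝ) : ℂ) ^ 2 * (((p (n - 1)).coeff (n - j) : ℝ) : ℂ)
  else 0

/-- The truncation `b_0 z^j + b_1 z^{j-1} + ⋯ + b_j` of a coefficient sequence. -/
def Ptrunc (b : ℕ → ℂ) (j : ℕ) (z : ℂ) : ℂ :=
  ∑ m ∈ Finset.range (j + 1), b m * z ^ (j - m)

/-- The polynomial `R_j(z) = −Q_n^j(z) π_n(z) + P_n^j(z) · (−2πi κ_{n-1}² π_{n-1}(z))`. -/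
def Rfun (n : ℕ) (p : ℕ → Polynomial ℝ) (κ : ℕ → ℝ) (j : ℕ) (z : ℂ) : ℂ :=
  -(Ptrunc (ccoef n p κ) j z) * Polynomial.aeval z (p n) +
    Ptrunc (bcoef n p) j z *
      (-(2 * Real.pi * Complex.I) * ((κ (n - 1) : ℝ) : ℂ) ^ 2 * Polynomial.aeval z (p (n - 1)))

lemma int_pow (V : ℝ → ℝ) (hV : Continuous V)
    (hVint : ∀ k : ℕ, Integrable (fun x : ℝ => |x| ^ k * Real.exp (-V x)))
    (k : ℕ) : Integrable (fun x : ℝ => x ^ k * Real.exp (-V x)) := by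
  refine (hVint k).mono' ?_ ?_
  · exact ((continuous_pow k).mul (Real.continuous_exp.comp hV.neg)).aestronglyMeasurable
  · filter_upwards with x
    rw [Real.norm_eq_abs, abs_mul, abs_pow, Real.abs_exp]

lemma int_poly (V : ℝ → ℝ) (hV : Continuous V)
    (hVint : ∀ k : ℕ, Integrable (fun x : ℝ => |x| ^ k * Real.exp (-V x)))
    (q : Polynomial ℝ) :
    Integrable (fun x : ℝ => q.eval x * Real.exp (-V x)) := by
  have h : (fun x : ℝ => q.eval x * Real.exp (-V x))
      = fun x : ℝ => ∑ i ∈ Finset.range (q.natDegree + 1),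
          q.coeff i * (x ^ i * Real.exp (-V x)) := by
    funext x
    rw [eval_eq_sum_range, Finset.sum_mul]
    simp [mul_assoc]
  rw [h]
  exact integrable_finset_sum _ (fun i _ => (int_pow V hV hVint i).const_mul _)

lemma int_poly2 (V : ℝ → ℝ) (hV : Continuous V)
    (hVint : ∀ k : ℕ, Integrable (fun x : ℝ => |x| ^ k * Real.exp (-V x)))
    (a b : Polynomial ℝ) :
    Integrable (fun x : ℝ => a.eval x * b.eval x * Real.exp (-V x)) := by
  have := int_poly V hV hVint (a * b)
  simpa [eval_mul] using this

lemma orth_poly (V : ℝ → ℝ) (hV : Continuous V)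
    (hVint : ∀ k : ℕ, Integrable (fun x : ℝ => |x| ^ k * Real.exp (-V x)))
    (p : ℕ → Polynomial ℝ)
    (hmonic : ∀ k, (p k).Monic)
    (hdeg : ∀ k, (p k).natDegree = k)
    (horth : ∀ k m, k ≠ m → ∫ x : ℝ, (p k).eval x * (p m).eval x * Real.exp (-V x) = 0)
    (k : ℕ) (q : Polynomial ℝ) (hq : q.degree < (k : ℕ)) :
    ∫ x : ℝ, q.eval x * (p k).eval x * Real.exp (-V x) = 0 := by
  suffices aux : ∀ d : ℕ, d < k → ∀ q : Polynomial ℝ, q.natDegree ≤ d →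
      ∫ x : ℝ, q.eval x * (p k).eval x * Real.exp (-V x) = 0 by
    rcases eq_or_ne q 0 with rfl | hq0
    · simp
    · exact aux q.natDegree ((natDegree_lt_iff_degree_lt hq0).mpr hq) q le_rfl
  intro d
  induction d with
  | zero =>
    intro hk q hq
    have hqC : q = C (q.coeff 0) := eq_C_of_natDegree_le_zero hq
    rw [hqC]
    have hp0 : p 0 = 1 := by
      have := (hmonic 0).natDegree_eq_zero.mp (hdeg 0)
      exact this
    have h0 := horth 0 k (by omega)
    rw [hp0] at h0
    simp only [eval_one, one_mul] at h0
    have : (fun x : ℝ => (C (q.coeff 0)).eval x * (p k).eval x * Real.exp (-V x))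
        = fun x : ℝ => q.coeff 0 * ((p k).eval x * Real.exp (-V x)) := by
      funext x; simp [mul_assoc]
    rw [this, integral_const_mul, h0, mul_zero]
  | succ d ih =>
    intro hk q hq
    set c := q.coeff (d + 1) with hc
    set r := q - C c * p (d + 1) with hr
    have hrdeg : r.natDegree ≤ d := by
      rw [natDegree_le_iff_coeff_eq_zero]
      intro m hm
      rcases eq_or_lt_of_le (Nat.succ_le_of_lt hm) with h | h
      · have hcoef : (p (d + 1)).coeff (d + 1) = 1 := by
          have := (hmonic (d + 1)).coeff_natDegree
          rwa [hdeg] at this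
        simp [hr, ← h, coeff_sub, coeff_C_mul, hcoef, hc]
      · have h1 : q.coeff m = 0 := coeff_eq_zero_of_natDegree_lt (by omega)
        have h2 : (p (d + 1)).coeff m = 0 :=
          coeff_eq_zero_of_natDegree_lt (by rw [hdeg]; omega)
        simp [hr, coeff_sub, coeff_C_mul, h1, h2]
    have key : (fun x : ℝ => q.eval x * (p k).eval x * Real.exp (-V x))
        = fun x : ℝ => c * ((p (d + 1)).eval x * (p k).eval x * Real.exp (-V x))
            + r.eval x * (p k).eval x * Real.exp (-V x) := by
      funext x
      have h : q.eval x = c * (p (d + 1)).eval x + r.eval x := by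
        simp only [hr, eval_sub, eval_mul, eval_C]; ring
      rw [h]; ring
    rw [key, integral_add (((int_poly2 V hV hVint (p (d+1)) (p k))).const_mul c)
        (int_poly2 V hV hVint r (p k)), integral_const_mul,
      horth (d + 1) k (by omega), ih (by omega) r hrdeg, mul_zero, add_zero]

lemma real_pairing
    (n : ℕ) (hn : 1 ≤ n)
    (V : ℝ → ℝ) (hV : Continuous V)
    (hVint : ∀ k : ℕ, Integrable (fun x : ℝ => |x| ^ k * Real.exp (-V x)))
    (p : ℕ → Polynomial ℝ)
    (hmonic : ∀ k, (p k).Monic)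
    (hdeg : ∀ k, (p k).natDegree = k)
    (horth : ∀ k m, k ≠ m → ∫ x : ℝ, (p k).eval x * (p m).eval x * Real.exp (-V x) = 0)
    (κ : ℕ → ℝ)
    (hκ : ∀ k, ∫ x : ℝ, ((p k).eval x) ^ 2 * Real.exp (-V x) = ((κ k) ^ 2)⁻¹)
    (j : ℕ) (hj : j + 1 ≤ n) :
    ∫ x : ℝ,
        (((∑ m ∈ Finset.range (j + 1), C ((p n).coeff (n - m)) * X ^ (j - m)) * p (n - 1)
          - (∑ m ∈ Finset.range (j + 1), C ((p (n - 1)).coeff (n - m)) * X ^ (j - m)) * p n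
            : Polynomial ℝ).eval x)
        * (p (n - j - 1)).eval x * Real.exp (-V x)
      = ((κ (n - 1)) ^ 2)⁻¹ := by
  have hterm_int : ∀ m : ℕ, Integrable (fun x : ℝ =>
      (p n).coeff (n - m) * ((X ^ (j - m) * p (n - j - 1)).eval x * (p (n - 1)).eval x
        * Real.exp (-V x))
      - (p (n - 1)).coeff (n - m) * ((X ^ (j - m) * p (n - j - 1)).eval x * (p n).eval x
        * Real.exp (-V x))) := fun m =>
    ((int_poly2 V hV hVint _ _).const_mul _).sub ((int_poly2 V hV hVint _ _).const_mul _)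
  have hpt : (fun x : ℝ =>
      (((∑ m ∈ Finset.range (j + 1), C ((p n).coeff (n - m)) * X ^ (j - m)) * p (n - 1)
        - (∑ m ∈ Finset.range (j + 1), C ((p (n - 1)).coeff (n - m)) * X ^ (j - m)) * p n
          : Polynomial ℝ).eval x)
        * (p (n - j - 1)).eval x * Real.exp (-V x))
      = fun x : ℝ => ∑ m ∈ Finset.range (j + 1),
        ((p n).coeff (n - m) * ((X ^ (j - m) * p (n - j - 1)).eval x * (p (n - 1)).eval x
          * Real.exp (-V x))
        - (p (n - 1)).coeff (n - m) * ((X ^ (j - m) * p (n - j - 1)).eval x * (p n).eval x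
          * Real.exp (-V x))) := by
    funext x
    simp only [eval_sub, eval_mul, eval_finset_sum, eval_C, eval_pow, eval_X,
      Finset.sum_mul, ← Finset.sum_sub_distrib]
    apply Finset.sum_congr rfl
    intro m _
    ring
  rw [hpt, integral_finset_sum _ (fun m _ => hterm_int m)]
  have hzero2 : ∀ m ∈ Finset.range (j + 1),
      ∫ x : ℝ, (X ^ (j - m) * p (n - j - 1)).eval x * (p n).eval x * Real.exp (-V x) = 0 := by
    intro m hm
    have hm' : m ≤ j := Nat.lt_succ_iff.mp (Finset.mem_range.mp hm)
    apply orth_poly V hV hVint p hmonic hdeg horth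
    refine lt_of_le_of_lt degree_le_natDegree ?_
    have h1 : (X ^ (j - m) * p (n - j - 1) : Polynomial ℝ).natDegree ≤ (j - m) + (n - j - 1) := by
      refine natDegree_mul_le.trans ?_
      rw [natDegree_X_pow, hdeg]
    exact_mod_cast lt_of_le_of_lt h1 (by omega)
  have hone : ∀ m ∈ Finset.range (j + 1), m ≠ 0 →
      ∫ x : ℝ, (X ^ (j - m) * p (n - j - 1)).eval x * (p (n - 1)).eval x * Real.exp (-V x)
        = 0 := by
    intro m hm hm0
    have hm' : m ≤ j := Nat.lt_succ_iff.mp (Finset.mem_range.mp hm)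
    apply orth_poly V hV hVint p hmonic hdeg horth
    refine lt_of_le_of_lt degree_le_natDegree ?_
    have h1 : (X ^ (j - m) * p (n - j - 1) : Polynomial ℝ).natDegree ≤ (j - m) + (n - j - 1) := by
      refine natDegree_mul_le.trans ?_
      rw [natDegree_X_pow, hdeg]
    exact_mod_cast lt_of_le_of_lt h1 (by omega)
  have hmain : ∫ x : ℝ, (X ^ (j - 0) * p (n - j - 1)).eval x * (p (n - 1)).eval x
      * Real.exp (-V x) = ((κ (n - 1)) ^ 2)⁻¹ := by
    set q0 : Polynomial ℝ := X ^ (j - 0) * p (n - j - 1) with hq0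
    have hq0m : q0.Monic := (monic_X_pow _).mul (hmonic _)
    have hq0d : q0.natDegree = n - 1 := by
      rw [hq0, (monic_X_pow _).natDegree_mul (hmonic _), natDegree_X_pow, hdeg]
      omega
    have e1 : (fun x : ℝ => q0.eval x * (p (n - 1)).eval x * Real.exp (-V x))
        = fun x : ℝ => ((p (n - 1)).eval x) ^ 2 * Real.exp (-V x)
            + (q0 - p (n - 1)).eval x * (p (n - 1)).eval x * Real.exp (-V x) := by
      funext x
      simp only [eval_sub]
      ring
    have h1 : Integrable (fun x : ℝ => ((p (n - 1)).eval x) ^ 2 * Real.exp (-V x)) := by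
      simpa [pow_two] using int_poly2 V hV hVint (p (n - 1)) (p (n - 1))
    have h2 : Integrable (fun x : ℝ =>
        (q0 - p (n - 1)).eval x * (p (n - 1)).eval x * Real.exp (-V x)) :=
      int_poly2 V hV hVint _ _
    have hdlt : (q0 - p (n - 1)).degree < ((n - 1 : ℕ) : WithBot ℕ) := by
      have hdeq : q0.degree = (p (n - 1)).degree := by
        rw [degree_eq_natDegree hq0m.ne_zero, degree_eq_natDegree (hmonic (n - 1)).ne_zero,
          hq0d, hdeg]
      have := degree_sub_lt hdeq hq0m.ne_zero
        (by rw [hq0m.leadingCoeff, (hmonic (n - 1)).leadingCoeff])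
      rwa [degree_eq_natDegree hq0m.ne_zero, hq0d] at this
    rw [e1, integral_add h1 h2, hκ (n - 1),
      orth_poly V hV hVint p hmonic hdeg horth (n - 1) _ hdlt, add_zero]
  rw [Finset.sum_eq_single_of_mem 0 (Finset.mem_range.mpr (by omega))]
  · rw [integral_sub ((int_poly2 V hV hVint _ _).const_mul _)
      ((int_poly2 V hV hVint _ _).const_mul _), integral_const_mul, integral_const_mul,
      hzero2 0 (Finset.mem_range.mpr (by omega)), hmain, mul_zero, sub_zero]
    have : (p n).coeff (n - 0) = 1 := by
      have := (hmonic n).coeff_natDegree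
      rwa [hdeg] at this
    rw [this, one_mul]
  · intro m hm hm0
    rw [integral_sub ((int_poly2 V hV hVint _ _).const_mul _)
      ((int_poly2 V hV hVint _ _).const_mul _), integral_const_mul, integral_const_mul,
      hzero2 m hm, hone m hm hm0, mul_zero, mul_zero, sub_zero]

/-- For `0 ≤ j ≤ n−1`, the pairing of `R_j = −Q_n^j π_n + P_n^j (−2πi κ_{n-1}² π_{n-1})`
with `π_{n−j−1}` equals `−2πi`. -/
theorem R_pairing_eq_neg_two_pi_I
    (n : ℕ) (hn : 1 ≤ n)
    (V : ℝ → ℝ) (hV : Continuous V)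
    (hVint : ∀ k : ℕ, MeasureTheory.Integrable (fun x : ℝ => |x| ^ k * Real.exp (-V x)))
    (p : ℕ → Polynomial ℝ)
    (hmonic : ∀ k, (p k).Monic)
    (hdeg : ∀ k, (p k).natDegree = k)
    (horth : ∀ k m, k ≠ m → ∫ x : ℝ, (p k).eval x * (p m).eval x * Real.exp (-V x) = 0)
    (κ : ℕ → ℝ) (hκpos : ∀ k, 0 < κ k)
    (hκ : ∀ k, ∫ x : ℝ, ((p k).eval x) ^ 2 * Real.exp (-V x) = ((κ k) ^ 2)⁻¹)
    (j : ℕ) (hj : j + 1 ≤ n) :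
    ∫ x : ℝ, Rfun n p κ j (x : ℂ) * (((p (n - j - 1)).eval x : ℝ) : ℂ) *
        ((Real.exp (-V x) : ℝ) : ℂ)
      = -(2 * Real.pi * Complex.I) := by
  set A : Polynomial ℝ :=
    (∑ m ∈ Finset.range (j + 1), C ((p n).coeff (n - m)) * X ^ (j - m)) * p (n - 1)
      - (∑ m ∈ Finset.range (j + 1), C ((p (n - 1)).coeff (n - m)) * X ^ (j - m)) * p n
    with hA
  have haev : ∀ (x : ℝ) (q : Polynomial ℝ),
      Polynomial.aeval (x : ℂ) q = ((q.eval x : ℝ) : ℂ) := by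
    intro x q
    rw [show ((x : ℂ)) = algebraMap ℝ ℂ x from rfl, aeval_algebraMap_apply]
    simp
  have hpt : (fun x : ℝ => Rfun n p κ j (x : ℂ) * (((p (n - j - 1)).eval x : ℝ) : ℂ) *
        ((Real.exp (-V x) : ℝ) : ℂ))
      = fun x : ℝ => (-(2 * Real.pi * Complex.I) * ((κ (n - 1) : ℝ) : ℂ) ^ 2) *
          ((A.eval x * (p (n - j - 1)).eval x * Real.exp (-V x) : ℝ) : ℂ) := by
    funext x
    have hb : Ptrunc (bcoef n p) j (x : ℂ)
        = ∑ m ∈ Finset.range (j + 1), (((p n).coeff (n - m) : ℝ) : ℂ) * (x : ℂ) ^ (j - m) := by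
      unfold Ptrunc
      refine Finset.sum_congr rfl (fun m hm => ?_)
      have hm' : m ≤ n := le_trans (Nat.lt_succ_iff.mp (Finset.mem_range.mp hm)) (by omega)
      rw [bcoef, if_pos hm']
    have hc : Ptrunc (ccoef n p κ) j (x : ℂ)
        = (-(2 * Real.pi * Complex.I) * ((κ (n - 1) : ℝ) : ℂ) ^ 2) *
            ∑ m ∈ Finset.range (j + 1),
              (((p (n - 1)).coeff (n - m) : ℝ) : ℂ) * (x : ℂ) ^ (j - m) := by
      unfold Ptrunc
      rw [Finset.mul_sum]
      refine Finset.sum_congr rfl (fun m hm => ?_)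
      have hm' : m ≤ n := le_trans (Nat.lt_succ_iff.mp (Finset.mem_range.mp hm)) (by omega)
      rw [ccoef, if_pos hm']
      ring
    have hAc : ((A.eval x : ℝ) : ℂ)
        = (∑ m ∈ Finset.range (j + 1),
              (((p n).coeff (n - m) : ℝ) : ℂ) * (x : ℂ) ^ (j - m))
            * (((p (n - 1)).eval x : ℝ) : ℂ)
          - (∑ m ∈ Finset.range (j + 1),
              (((p (n - 1)).coeff (n - m) : ℝ) : ℂ) * (x : ℂ) ^ (j - m))
            * (((p n).eval x : ℝ) : ℂ) := by
      rw [hA]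
      simp only [eval_sub, eval_mul, eval_finset_sum, eval_C, eval_pow, eval_X]
      push_cast
      ring
    rw [Rfun, hb, hc, haev x (p n), haev x (p (n - 1))]
    push_cast [hAc]
    ring
  have hI : ∫ x : ℝ, ((A.eval x * (p (n - j - 1)).eval x * Real.exp (-V x) : ℝ) : ℂ)
      = ((∫ x : ℝ, A.eval x * (p (n - j - 1)).eval x * Real.exp (-V x) : ℝ) : ℂ) :=
    integral_ofReal
  rw [hpt, integral_const_mul, hI,
    real_pairing n hn V hV hVint p hmonic hdeg horth κ hκ j hj]
  have hκ0 : (κ (n - 1) : ℝ) ≠ 0 := (hκpos (n - 1)).ne'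
  have : (((((κ (n - 1) : ℝ)) ^ 2)⁻¹ : ℝ) : ℂ) = (((κ (n - 1) : ℝ) : ℂ) ^ 2)⁻¹ := by
    push_cast
    ring
  rw [this, mul_assoc, mul_inv_cancel₀ (pow_ne_zero 2 (Complex.ofReal_ne_zero.mpr hκ0)),
    mul_one]

end
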